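/- Let Γ and E be real N×T matrices with rank(Γ) ≤ R, and suppose Γ̂ minimizes ‖Γ + E − G‖_F² over all real N×T matrices G with rank(G) ≤ R. Then ‖Γ̂ − Γ‖_F ≤ 2 √(2R) · s_1(E) and ‖Γ̂ − Γ‖_* ≤ 4R · s_1(E). -/

import Mathlib

open scoped BigOperators

noncomputable section

/-- Frobenius inner product of two real `N × T` matrices. -/
def finner {N T : ℕ} (A B : Matrix (Fin N) (Fin T) ℝ) : ℝ :=
  ∑ i, ∑ t, A i t * B i t

/-- Frobenius norm of a real `N × T` matrix. -/
def fnorm {N T : ℕ} (A : Matrix (Fin N) (Fin T) ℝ) : ℝ :=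
  Real.sqrt (finner A A)

/-- The `j`-th singular value (0-indexed, in decreasing order) of a real `N × T` matrix:
the square root of the `j`-th largest eigenvalue of `A * Aᵀ`; `0` for `j ≥ N`. -/
def sval {N T : ℕ} (A : Matrix (Fin N) (Fin T) ℝ) (j : ℕ) : ℝ :=
  if h : j < N then
    Real.sqrt
      ((Matrix.isHermitian_mul_conjTranspose_self A).eigenvalues
        (Tuple.sort ((Matrix.isHermitian_mul_conjTranspose_self A).eigenvalues)
          ((⟨j, h⟩ : Fin N).rev)))
  else 0

/-- Spectral norm: the largest singular value. -/
def s1 {N T : ℕ} (A : Matrix (Fin N) (Fin T) ℝ) : ℝ := sval A 0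

/-- Nuclear norm: the sum of the singular values. -/
def nucNorm {N T : ℕ} (A : Matrix (Fin N) (Fin T) ℝ) : ℝ :=
  ∑ j ∈ Finset.range N, sval A j


open Matrix

-- basic finner lemmas
lemma finner_eq_trace {N T : ℕ} (A B : Matrix (Fin N) (Fin T) ℝ) :
    finner A B = (Aᴴ * B).trace := by
  simp only [finner, Matrix.trace, Matrix.diag, Matrix.mul_apply, Matrix.conjTranspose_apply,
    star_trivial]
  rw [Finset.sum_comm]

lemma finner_comm {N T : ℕ} (A B : Matrix (Fin N) (Fin T) ℝ) : finner A B = finner B A := by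
  simp [finner, mul_comm]

lemma finner_self_nonneg {N T : ℕ} (A : Matrix (Fin N) (Fin T) ℝ) : 0 ≤ finner A A := by
  apply Finset.sum_nonneg; intro i _
  apply Finset.sum_nonneg; intro t _
  exact mul_self_nonneg _

lemma fnorm_sq {N T : ℕ} (A : Matrix (Fin N) (Fin T) ℝ) : fnorm A ^ 2 = finner A A :=
  Real.sq_sqrt (finner_self_nonneg A)

lemma fnorm_nonneg {N T : ℕ} (A : Matrix (Fin N) (Fin T) ℝ) : 0 ≤ fnorm A :=
  Real.sqrt_nonneg _

lemma finner_sub_left {N T : ℕ} (X Y Z : Matrix (Fin N) (Fin T) ℝ) :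
    finner (X - Y) Z = finner X Z - finner Y Z := by
  simp [finner, sub_mul, Finset.sum_sub_distrib]

lemma finner_sub_right {N T : ℕ} (X Y Z : Matrix (Fin N) (Fin T) ℝ) :
    finner X (Y - Z) = finner X Y - finner X Z := by
  simp [finner, mul_sub, Finset.sum_sub_distrib]

lemma finner_expand {N T : ℕ} (X Y : Matrix (Fin N) (Fin T) ℝ) :
    finner (X - Y) (X - Y) = finner X X - 2 * finner X Y + finner Y Y := by
  rw [finner_sub_left, finner_sub_right, finner_sub_right, finner_comm Y X]
  ring

lemma s1_nonneg {N T : ℕ} (E : Matrix (Fin N) (Fin T) ℝ) : 0 ≤ s1 E := by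
  unfold s1 sval
  split
  · exact Real.sqrt_nonneg _
  · exact le_refl 0

lemma finner_trans_unitary {N T : ℕ} (U : Matrix (Fin N) (Fin N) ℝ)
    (hU : U * Uᴴ = 1) (A B : Matrix (Fin N) (Fin T) ℝ) :
    finner A B = finner (Uᴴ * A) (Uᴴ * B) := by
  rw [finner_eq_trace, finner_eq_trace, conjTranspose_mul, conjTranspose_conjTranspose,
    Matrix.mul_assoc, ← Matrix.mul_assoc U, hU, Matrix.one_mul]

lemma rowsq {N T : ℕ} (P : Matrix (Fin N) (Fin T) ℝ) (k : Fin N) :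
    ∑ t, P k t ^ 2 = (P * Pᴴ) k k := by
  simp [Matrix.mul_apply, Matrix.conjTranspose_apply, sq]

lemma quad_le {n : ℕ} (B : Matrix (Fin n) (Fin n) ℝ) (hB : B.IsHermitian)
    (c : ℝ) (hc : ∀ i, hB.eigenvalues i ≤ c) (x : Fin n → ℝ) :
    x ⬝ᵥ (B *ᵥ x) ≤ c * (x ⬝ᵥ x) := by
  set U : Matrix (Fin n) (Fin n) ℝ := (hB.eigenvectorUnitary : Matrix (Fin n) (Fin n) ℝ) with hUdef
  have hUU : U * Uᴴ = 1 := by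
    simpa [Matrix.star_eq_conjTranspose] using
      (Matrix.mem_unitaryGroup_iff).mp hB.eigenvectorUnitary.2
  set y : Fin n → ℝ := Uᴴ *ᵥ x with hy
  have hrow : x ᵥ* U = y := by
    funext j
    simp [hy, Matrix.vecMul, Matrix.mulVec, dotProduct, Matrix.conjTranspose_apply,
      mul_comm]
  have hxy : x ⬝ᵥ (B *ᵥ x) = ∑ j, hB.eigenvalues j * (y j) ^ 2 := by
    conv_lhs => rw [hB.spectral_theorem]
    rw [Unitary.conjStarAlgAut_apply, Matrix.star_eq_conjTranspose, ← Matrix.mulVec_mulVec, ← Matrix.mulVec_mulVec,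
      Matrix.dotProduct_mulVec, hrow]
    simp only [Matrix.mulVec_diagonal, dotProduct, sq, Function.comp_apply,
      RCLike.ofReal_real_eq_id, id_eq, ← hUdef, ← hy]
    apply Finset.sum_congr rfl
    intro j _
    ring
  have hyy : ∑ j, (y j) ^ 2 = x ⬝ᵥ x := by
    have : ∑ j, (y j) ^ 2 = y ⬝ᵥ y := by simp [dotProduct, sq]
    have h2 : x ⬝ᵥ ((U * Uᴴ) *ᵥ x) = y ⬝ᵥ y := by
      rw [← Matrix.mulVec_mulVec, Matrix.dotProduct_mulVec, hrow]
    rw [this, ← h2, hUU, Matrix.one_mulVec]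
  calc x ⬝ᵥ (B *ᵥ x) = ∑ j, hB.eigenvalues j * (y j) ^ 2 := hxy
    _ ≤ ∑ j, c * (y j) ^ 2 := by
        apply Finset.sum_le_sum; intro j _
        exact mul_le_mul_of_nonneg_right (hc j) (sq_nonneg _)
    _ = c * (x ⬝ᵥ x) := by rw [← Finset.mul_sum, hyy]

lemma eig_le_s1_sq {N T : ℕ} (E : Matrix (Fin N) (Fin T) ℝ) (j : Fin N) :
    (Matrix.isHermitian_mul_conjTranspose_self E).eigenvalues j ≤ s1 E ^ 2 := by
  have hN : 0 < N := j.pos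
  set μ := (Matrix.isHermitian_mul_conjTranspose_self E).eigenvalues with hμ
  set σ := Tuple.sort μ with hσ
  have hs1 : s1 E = Real.sqrt (μ (σ ((⟨0, hN⟩ : Fin N).rev))) := by
    rw [s1, sval, dif_pos hN]
  have htop : 0 ≤ μ (σ ((⟨0, hN⟩ : Fin N).rev)) :=
    Matrix.eigenvalues_self_mul_conjTranspose_nonneg E _
  have hsq : s1 E ^ 2 = μ (σ ((⟨0, hN⟩ : Fin N).rev)) := by
    rw [hs1, Real.sq_sqrt htop]
  rw [hsq]
  have hj : j = σ (σ.symm j) := (Equiv.apply_symm_apply σ j).symm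
  rw [hj]
  have hle : σ.symm j ≤ (⟨0, hN⟩ : Fin N).rev := by
    have hlt := (σ.symm j).isLt
    simp only [Fin.le_def, Fin.val_rev]
    omega
  exact Tuple.monotone_sort μ hle

lemma nucNorm_eq_sum {N T : ℕ} (D : Matrix (Fin N) (Fin T) ℝ) :
    nucNorm D = ∑ k : Fin N,
      Real.sqrt ((Matrix.isHermitian_mul_conjTranspose_self D).eigenvalues k) := by
  set μ := (Matrix.isHermitian_mul_conjTranspose_self D).eigenvalues with hμ
  set σ := Tuple.sort μ with hσ
  rw [nucNorm, Finset.sum_range (fun j => sval D j)]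
  have h1 : ∀ i : Fin N, sval D (i : ℕ) = Real.sqrt (μ (σ (i.rev))) := by
    intro i
    rw [sval, dif_pos i.isLt]
  simp only [h1]
  exact Equiv.sum_comp (Fin.revPerm.trans σ) (fun k => Real.sqrt (μ k))

lemma finner_self_eq_sum {N T : ℕ} (D : Matrix (Fin N) (Fin T) ℝ) :
    finner D D = ∑ k : Fin N,
      (Matrix.isHermitian_mul_conjTranspose_self D).eigenvalues k := by
  have hM := Matrix.isHermitian_mul_conjTranspose_self D
  rw [finner_eq_trace, Matrix.trace_mul_comm]
  conv_lhs => rw [hM.spectral_theorem]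
  rw [Unitary.conjStarAlgAut_apply, Matrix.star_eq_conjTranspose, Matrix.trace_mul_cycle]
  have hUU : ((hM.eigenvectorUnitary : Matrix (Fin N) (Fin N) ℝ))ᴴ *
      (hM.eigenvectorUnitary : Matrix (Fin N) (Fin N) ℝ) = 1 := by
    simpa [Matrix.star_eq_conjTranspose] using
      (Matrix.mem_unitaryGroup_iff').mp hM.eigenvectorUnitary.2
  rw [hUU, Matrix.one_mul, Matrix.trace_diagonal]
  simp

lemma finner_le_nucNorm_mul_s1 {N T : ℕ} (D E : Matrix (Fin N) (Fin T) ℝ) :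
    finner D E ≤ nucNorm D * s1 E := by
  classical
  have hM := Matrix.isHermitian_mul_conjTranspose_self D
  set U : Matrix (Fin N) (Fin N) ℝ := (hM.eigenvectorUnitary : Matrix (Fin N) (Fin N) ℝ)
    with hUdef
  have hUU : U * Uᴴ = 1 := by
    simpa only [Matrix.star_eq_conjTranspose] using
      (Matrix.mem_unitaryGroup_iff).mp hM.eigenvectorUnitary.2
  have hUU' : Uᴴ * U = 1 := by
    simpa only [Matrix.star_eq_conjTranspose] using
      (Matrix.mem_unitaryGroup_iff').mp hM.eigenvectorUnitary.2
  set P := Uᴴ * D with hP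
  set Q := Uᴴ * E with hQ
  have h1 : finner D E = finner P Q := finner_trans_unitary U hUU D E
  have h2 : ∀ k, ∑ t, P k t ^ 2 = hM.eigenvalues k := by
    intro k
    rw [rowsq]
    have hPP : P * Pᴴ = Matrix.diagonal hM.eigenvalues := by
      rw [hP, Matrix.conjTranspose_mul, Matrix.conjTranspose_conjTranspose]
      calc Uᴴ * D * (Dᴴ * U) = Uᴴ * (D * Dᴴ) * U := by
            rw [Matrix.mul_assoc, Matrix.mul_assoc, Matrix.mul_assoc]
        _ = Matrix.diagonal hM.eigenvalues := by
            have := hM.spectral_theorem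
            rw [Unitary.conjStarAlgAut_apply, Matrix.star_eq_conjTranspose, ← hUdef] at this
            have h' : Uᴴ * (D * Dᴴ) * U =
                Uᴴ * (U * diagonal (RCLike.ofReal ∘ hM.eigenvalues) * Uᴴ) * U :=
              congrArg (fun M => Uᴴ * M * U) this
            rw [h']
            simp only [Matrix.mul_assoc]
            rw [hUU', Matrix.mul_one, ← Matrix.mul_assoc, hUU', Matrix.one_mul]
            congr 1
    rw [hPP, Matrix.diagonal_apply_eq]
  have h3 : ∀ k, ∑ t, Q k t ^ 2 ≤ s1 E ^ 2 := by
    intro k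
    rw [rowsq]
    set x : Fin N → ℝ := fun i => U i k with hx
    have hQQ : (Q * Qᴴ) k k = x ⬝ᵥ ((E * Eᴴ) *ᵥ x) := by
      simp only [hQ, Matrix.mul_apply, Matrix.conjTranspose_apply, Matrix.mulVec,
        dotProduct, star_trivial, hx, Finset.mul_sum, Finset.sum_mul]
      rw [Finset.sum_comm]
      apply Finset.sum_congr rfl
      intro i _
      rw [Finset.sum_comm]
      apply Finset.sum_congr rfl
      intro t _
      apply Finset.sum_congr rfl
      intro j _
      ring
    have hxx : x ⬝ᵥ x = 1 := by
      have : x ⬝ᵥ x = (Uᴴ * U) k k := by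
        simp [Matrix.mul_apply, Matrix.conjTranspose_apply, dotProduct, hx, mul_comm]
      rw [this, hUU', Matrix.one_apply_eq]
    calc (Q * Qᴴ) k k = x ⬝ᵥ ((E * Eᴴ) *ᵥ x) := hQQ
      _ ≤ s1 E ^ 2 * (x ⬝ᵥ x) :=
          quad_le (E * Eᴴ) (Matrix.isHermitian_mul_conjTranspose_self E) (s1 E ^ 2)
            (eig_le_s1_sq E) x
      _ = s1 E ^ 2 := by rw [hxx, mul_one]
  have h4 : finner P Q ≤ ∑ k, Real.sqrt (hM.eigenvalues k) * s1 E := by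
    rw [finner]
    apply Finset.sum_le_sum
    intro k _
    have cs : (∑ t, P k t * Q k t) ≤
        Real.sqrt (∑ t, P k t ^ 2) * Real.sqrt (∑ t, Q k t ^ 2) := by
      calc (∑ t, P k t * Q k t) ≤ |∑ t, P k t * Q k t| := le_abs_self _
        _ = Real.sqrt ((∑ t, P k t * Q k t) ^ 2) := (Real.sqrt_sq_eq_abs _).symm
        _ ≤ Real.sqrt ((∑ t, P k t ^ 2) * ∑ t, Q k t ^ 2) :=
            Real.sqrt_le_sqrt (Finset.sum_mul_sq_le_sq_mul_sq _ _ _)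
        _ = _ := Real.sqrt_mul (Finset.sum_nonneg fun t _ => sq_nonneg _) _
    refine cs.trans ?_
    rw [h2 k]
    apply mul_le_mul_of_nonneg_left _ (Real.sqrt_nonneg _)
    calc Real.sqrt (∑ t, Q k t ^ 2) ≤ Real.sqrt (s1 E ^ 2) := Real.sqrt_le_sqrt (h3 k)
      _ = s1 E := Real.sqrt_sq (s1_nonneg E)
  rw [h1, nucNorm_eq_sum, Finset.sum_mul]
  exact h4

lemma rank_sub_le {N T : ℕ} (A B : Matrix (Fin N) (Fin T) ℝ) :
    (A - B).rank ≤ A.rank + B.rank := by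
  have h : LinearMap.range (A - B).mulVecLin ≤
      LinearMap.range A.mulVecLin ⊔ LinearMap.range B.mulVecLin := by
    rintro x ⟨v, rfl⟩
    have : (A - B).mulVecLin v = A.mulVecLin v - B.mulVecLin v := by
      simp [Matrix.mulVecLin_apply, Matrix.sub_mulVec]
    rw [this]
    exact Submodule.sub_mem _ (Submodule.mem_sup_left ⟨v, rfl⟩)
      (Submodule.mem_sup_right ⟨v, rfl⟩)
  calc (A - B).rank ≤ Module.finrank ℝ
        ↥(LinearMap.range A.mulVecLin ⊔ LinearMap.range B.mulVecLin) :=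
        Submodule.finrank_mono h
    _ ≤ A.rank + B.rank := Submodule.finrank_add_le_finrank_add_finrank _ _

lemma sval_nonneg {N T : ℕ} (D : Matrix (Fin N) (Fin T) ℝ) (j : ℕ) : 0 ≤ sval D j := by
  unfold sval
  split
  · exact Real.sqrt_nonneg _
  · exact le_refl 0

lemma nucNorm_nonneg {N T : ℕ} (D : Matrix (Fin N) (Fin T) ℝ) : 0 ≤ nucNorm D :=
  Finset.sum_nonneg fun j _ => sval_nonneg D j

lemma nucNorm_le_sqrt_rank_mul_fnorm {N T : ℕ} (D : Matrix (Fin N) (Fin T) ℝ) :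
    nucNorm D ≤ Real.sqrt (D.rank) * fnorm D := by
  classical
  set eig := (Matrix.isHermitian_mul_conjTranspose_self D).eigenvalues with heig
  have heig0 : ∀ i, 0 ≤ eig i := fun i =>
    Matrix.eigenvalues_self_mul_conjTranspose_nonneg D i
  set s : Finset (Fin N) := Finset.univ.filter (fun i => eig i ≠ 0) with hs
  have h0 : nucNorm D = ∑ i ∈ s, Real.sqrt (eig i) := by
    rw [nucNorm_eq_sum, ← heig, hs]
    rw [Finset.sum_filter_of_ne]
    intro x _ hx
    intro hcon
    exact hx (by rw [hcon, Real.sqrt_zero])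
  have hcard : (s.card : ℝ) = (D.rank : ℝ) := by
    have h1 : (D * Dᴴ).rank = Fintype.card {i // eig i ≠ 0} :=
      (Matrix.isHermitian_mul_conjTranspose_self D).rank_eq_card_non_zero_eigs
    rw [Matrix.rank_self_mul_conjTranspose] at h1
    rw [h1, Fintype.card_subtype]
  have hkey : nucNorm D ^ 2 ≤ (D.rank : ℝ) * fnorm D ^ 2 := by
    rw [h0]
    calc (∑ i ∈ s, Real.sqrt (eig i)) ^ 2
        ≤ (s.card : ℝ) * ∑ i ∈ s, Real.sqrt (eig i) ^ 2 := by
          exact sq_sum_le_card_mul_sum_sq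
      _ = (D.rank : ℝ) * ∑ i ∈ s, eig i := by
          rw [hcard]
          congr 1
          exact Finset.sum_congr rfl fun i _ => Real.sq_sqrt (heig0 i)
      _ ≤ (D.rank : ℝ) * ∑ i, eig i := by
          apply mul_le_mul_of_nonneg_left _ (Nat.cast_nonneg _)
          exact Finset.sum_le_sum_of_subset_of_nonneg (Finset.filter_subset _ _)
            (fun i _ _ => heig0 i)
      _ = (D.rank : ℝ) * fnorm D ^ 2 := by
          rw [fnorm_sq, finner_self_eq_sum, heig]
  calc nucNorm D = Real.sqrt (nucNorm D ^ 2) := (Real.sqrt_sq (nucNorm_nonneg D)).symm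
    _ ≤ Real.sqrt ((D.rank : ℝ) * fnorm D ^ 2) := Real.sqrt_le_sqrt hkey
    _ = Real.sqrt (D.rank) * fnorm D := by
        rw [Real.sqrt_mul (Nat.cast_nonneg _), Real.sqrt_sq (fnorm_nonneg D)]


/-- Error bounds for the rank-constrained least-squares estimator: if `Γ̂` minimizes
`‖Γ + E − G‖_F²` over matrices `G` of rank at most `R`, and `rank Γ ≤ R`, then
`‖Γ̂ − Γ‖_F ≤ 2√(2R) · s₁(E)` and `‖Γ̂ − Γ‖_* ≤ 4R · s₁(E)`. -/
theorem rank_constrained_LS_error_bounds {N T : ℕ} (R : ℕ)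
    (Γ E Γhat : Matrix (Fin N) (Fin T) ℝ)
    (hΓ : Γ.rank ≤ R) (hΓhat : Γhat.rank ≤ R)
    (hmin : ∀ G : Matrix (Fin N) (Fin T) ℝ, G.rank ≤ R →
      (fnorm (Γ + E - Γhat)) ^ 2 ≤ (fnorm (Γ + E - G)) ^ 2) :
    fnorm (Γhat - Γ) ≤ 2 * Real.sqrt (2 * (R : ℝ)) * s1 E ∧
    nucNorm (Γhat - Γ) ≤ 4 * (R : ℝ) * s1 E := by
  set Δ := Γhat - Γ with hΔ
  have hrk : (Δ.rank : ℝ) ≤ 2 * (R : ℝ) := by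
    have h := (rank_sub_le Γhat Γ).trans (Nat.add_le_add hΓhat hΓ)
    calc (Δ.rank : ℝ) ≤ ((R + R : ℕ) : ℝ) := by exact_mod_cast h
      _ = 2 * (R : ℝ) := by push_cast; ring
  have hmin0 := hmin Γ hΓ
  have e1 : Γ + E - Γ = E := by abel
  have e2 : Γ + E - Γhat = E - Δ := by rw [hΔ]; abel
  rw [e1, e2, fnorm_sq, fnorm_sq, finner_expand] at hmin0
  have key1 : finner Δ Δ ≤ 2 * finner Δ E := by
    have hcomm := finner_comm E Δ
    linarith
  have key2 : finner Δ E ≤ nucNorm Δ * s1 E := finner_le_nucNorm_mul_s1 Δ E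
  have hB : nucNorm Δ ≤ Real.sqrt (2 * (R : ℝ)) * fnorm Δ := by
    calc nucNorm Δ ≤ Real.sqrt (Δ.rank) * fnorm Δ := nucNorm_le_sqrt_rank_mul_fnorm Δ
      _ ≤ Real.sqrt (2 * (R : ℝ)) * fnorm Δ :=
          mul_le_mul_of_nonneg_right (Real.sqrt_le_sqrt hrk) (fnorm_nonneg Δ)
  have ha2 : fnorm Δ ^ 2 = finner Δ Δ := fnorm_sq Δ
  have hs0 : 0 ≤ s1 E := s1_nonneg E
  have ha0 : 0 ≤ fnorm Δ := fnorm_nonneg Δ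
  have hn0 : 0 ≤ nucNorm Δ := nucNorm_nonneg Δ
  have hc0 : 0 ≤ Real.sqrt (2 * (R : ℝ)) := Real.sqrt_nonneg _
  have hcsq : Real.sqrt (2 * (R : ℝ)) ^ 2 = 2 * (R : ℝ) := Real.sq_sqrt (by positivity)
  have g1 : fnorm Δ ≤ 2 * Real.sqrt (2 * (R : ℝ)) * s1 E := by
    rcases eq_or_lt_of_le ha0 with h0 | h0
    · rw [← h0]; positivity
    · have hf : fnorm Δ * fnorm Δ ≤ (2 * Real.sqrt (2 * (R : ℝ)) * s1 E) * fnorm Δ := by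
        nlinarith [key1, key2, hB, hs0, hc0]
      exact le_of_mul_le_mul_right hf h0
  refine ⟨g1, ?_⟩
  have g2 : nucNorm Δ ≤ Real.sqrt (2 * (R : ℝ)) * (2 * Real.sqrt (2 * (R : ℝ)) * s1 E) :=
    hB.trans (mul_le_mul_of_nonneg_left g1 hc0)
  calc nucNorm Δ ≤ Real.sqrt (2 * (R : ℝ)) * (2 * Real.sqrt (2 * (R : ℝ)) * s1 E) := g2
    _ = 2 * (Real.sqrt (2 * (R : ℝ)) ^ 2) * s1 E := by ring
    _ = 4 * (R : ℝ) * s1 E := by rw [hcsq]; ring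

end
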